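/- Let Q be a real symmetric positive semidefinite n×n matrix with Q·𝟏 = 0, and let λ₂ > 0 satisfy yᵀQy ≥ λ₂·‖y‖₂² for every y ∈ ℝⁿ with Σ_i y_i = 0. Let Ω be a predefined-time consensus function with data (Ω̂, β, d), let T_c > 0, and let κ_i ≥ 1/(λ₂·β(n)^{2−d}·T_c) for i = 1,…,n. Let x : [t₀,∞) → ℝⁿ be differentiable with ẋ_i(t) = −κ_i·Ω(|e_i(t)|)/e_i(t) if e_i(t) ≠ 0 and ẋ_i(t) = 0 if e_i(t) = 0, where e(t) = Q·x(t). Then for all t ≥ t₀ + T_c, x_1(t) = x_2(t) = ⋯ = x_n(t); i.e. consensus is reached within the predefined time T_c. -/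

import Mathlib

open Matrix MeasureTheory

def IsPredefinedTimeConsensusFunction (Ω Ωhat : ℝ → ℝ) (β : ℕ → ℝ) (d : ℝ) : Prop :=
  Monotone Ω ∧ (∀ z : ℝ, 0 ≤ z → 0 ≤ Ω z) ∧
  MonotoneOn Ωhat (Set.Ici 0) ∧ (∀ z : ℝ, 0 < z → 0 < Ωhat z) ∧
  ContinuousOn (fun z => Ωhat z / z) (Set.Ioi 0) ∧
  Antitone β ∧ (∀ n : ℕ, 0 < β n) ∧ 1 ≤ d ∧
  (∀ n : ℕ, 1 ≤ n → ∀ x : Fin n → ℝ, (∀ i, 0 ≤ x i) →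
    Ωhat (β n * Real.sqrt (∑ i, x i ^ 2)) ≤ β n ^ d * ∑ i, Ω (x i)) ∧
  (∫ z in Set.Ioi (0:ℝ), z / Ωhat z) = 1

private lemma quadFacts {n : ℕ} (hn : 1 ≤ n) (Q : Matrix (Fin n) (Fin n) ℝ)
    (hQsymm : Q.IsSymm) (hQpsd : Q.PosSemidef)
    (hQ1 : Q.mulVec (fun _ => (1:ℝ)) = 0)
    (lam2 : ℝ) (hlam2 : 0 < lam2)
    (hRay : ∀ y : Fin n → ℝ, (∑ i, y i) = 0 →
      lam2 * (∑ i, y i ^ 2) ≤ y ⬝ᵥ Q.mulVec y)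
    (u : Fin n → ℝ) :
    lam2 * (u ⬝ᵥ Q.mulVec u) ≤ ∑ i, (Q.mulVec u i)^2 ∧
    (u ⬝ᵥ Q.mulVec u = 0 → Q.mulVec u = 0 ∧ ∀ i j, u i = u j) := by
  have hne : (n:ℝ) ≠ 0 := by
    have : (0:ℝ) < n := by exact_mod_cast Nat.lt_of_lt_of_le Nat.zero_lt_one hn
    exact ne_of_gt this
  set m : ℝ := (∑ i, u i) / n with hm
  set y : Fin n → ℝ := fun i => u i - m with hy
  have hysum : (∑ i, y i) = 0 := by
    simp only [hy, Finset.sum_sub_distrib, Finset.sum_const, Finset.card_univ,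
      Fintype.card_fin, nsmul_eq_mul, hm]
    field_simp
    ring
  have hyu : y = u - m • (fun _ => (1:ℝ)) := by
    funext i; simp [hy, smul_eq_mul]
  have hQy : Q.mulVec y = Q.mulVec u := by
    rw [hyu, Matrix.mulVec_sub, Matrix.mulVec_smul, hQ1]
    simp
  have hones : (fun _ => (1:ℝ)) ⬝ᵥ Q.mulVec u = 0 := by
    rw [Matrix.dotProduct_mulVec]
    have hvm : (fun _ => (1:ℝ)) ᵥ* Q = 0 := by
      nth_rewrite 1 [← hQsymm]
      rw [Matrix.vecMul_transpose, hQ1]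
    rw [hvm, zero_dotProduct]
  have huy : u = y + m • (fun _ => (1:ℝ)) := by
    funext i; simp [hy, smul_eq_mul]
  have hVy : y ⬝ᵥ Q.mulVec u = u ⬝ᵥ Q.mulVec u := by
    nth_rewrite 2 [huy]
    rw [add_dotProduct, smul_dotProduct, hones]
    simp
  have hVnn : 0 ≤ u ⬝ᵥ Q.mulVec u := by
    have := hQpsd.dotProduct_mulVec_nonneg u; simpa using this
  have hray := hRay y hysum
  rw [hQy, hVy] at hray
  -- Cauchy-Schwarz
  have hCS : (∑ i, y i * Q.mulVec u i) ^ 2 ≤ (∑ i, y i ^ 2) * ∑ i, (Q.mulVec u i) ^ 2 :=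
    Finset.sum_mul_sq_le_sq_mul_sq Finset.univ y (Q.mulVec u)
  have hyQu : (∑ i, y i * Q.mulVec u i) = u ⬝ᵥ Q.mulVec u := hVy
  rw [hyQu] at hCS
  have hynn : 0 ≤ ∑ i, y i ^ 2 := by positivity
  have hennn : 0 ≤ ∑ i, (Q.mulVec u i) ^ 2 := by positivity
  constructor
  · rcases eq_or_lt_of_le hVnn with h0 | h0
    · rw [← h0]; simpa using hennn
    · nlinarith [hCS, hray, h0, hennn, hynn]
  · intro hV0
    have hy0 : ∀ i, y i = 0 := by
      rw [hV0] at hray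
      have hsum0 : (∑ i, y i ^ 2) = 0 := le_antisymm (by nlinarith) hynn
      intro i
      have h2 := (Finset.sum_eq_zero_iff_of_nonneg
        (fun j (_ : j ∈ Finset.univ) => sq_nonneg (y j))).mp hsum0 i (Finset.mem_univ i)
      exact pow_eq_zero_iff (n := 2) (by norm_num) |>.mp h2
    have hyfun : y = 0 := funext hy0
    constructor
    · rw [← hQy, hyfun, Matrix.mulVec_zero]
    · intro i j
      have hi := hy0 i; have hj := hy0 j
      simp only [hy] at hi hj
      linarith


private lemma hasDerivAt_quadForm {n : ℕ} (Q : Matrix (Fin n) (Fin n) ℝ) (hQsymm : Q.IsSymm)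
    (x : ℝ → Fin n → ℝ) (v : Fin n → ℝ) (t : ℝ) (hx : HasDerivAt x v t) :
    HasDerivAt (fun s => x s ⬝ᵥ Q.mulVec (x s)) (2 * (v ⬝ᵥ Q.mulVec (x t))) t := by
  have hxi : ∀ i, HasDerivAt (fun s => x s i) (v i) t := fun i => hasDerivAt_pi.mp hx i
  have h1 : ∀ i, HasDerivAt (fun s => ∑ j, Q i j * x s j) (∑ j, Q i j * v j) t :=
    fun i => HasDerivAt.fun_sum (fun j _ => (hxi j).const_mul (Q i j))
  have h2 : HasDerivAt (fun s => ∑ i, x s i * ∑ j, Q i j * x s j)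
      (∑ i, (v i * ∑ j, Q i j * x t j + x t i * ∑ j, Q i j * v j)) t :=
    HasDerivAt.fun_sum (fun i _ => (hxi i).mul (h1 i))
  have e1 : (fun s => x s ⬝ᵥ Q.mulVec (x s)) = fun s => ∑ i, x s i * ∑ j, Q i j * x s j := by
    funext s
    simp [dotProduct, Matrix.mulVec]
  have hC : x t ⬝ᵥ Q.mulVec v = v ⬝ᵥ Q.mulVec (x t) := by
    rw [Matrix.dotProduct_mulVec]
    nth_rewrite 1 [← hQsymm]
    rw [Matrix.vecMul_transpose, dotProduct_comm]
  have e2 : (∑ i, (v i * ∑ j, Q i j * x t j + x t i * ∑ j, Q i j * v j))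
      = 2 * (v ⬝ᵥ Q.mulVec (x t)) := by
    rw [Finset.sum_add_distrib]
    have hA : (∑ i, v i * ∑ j, Q i j * x t j) = v ⬝ᵥ Q.mulVec (x t) := by
      simp [dotProduct, Matrix.mulVec]
    have hB : (∑ i, x t i * ∑ j, Q i j * v j) = x t ⬝ᵥ Q.mulVec v := by
      simp [dotProduct, Matrix.mulVec]
    rw [hA, hB, hC]; ring
  rw [e1, ← e2]
  exact h2


theorem stmt15 {n : ℕ} (hn : 1 ≤ n) (Q : Matrix (Fin n) (Fin n) ℝ)
    (hQsymm : Q.IsSymm) (hQpsd : Q.PosSemidef)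
    (hQ1 : Q.mulVec (fun _ => (1:ℝ)) = 0)
    (lam2 : ℝ) (hlam2 : 0 < lam2)
    (hRay : ∀ y : Fin n → ℝ, (∑ i, y i) = 0 →
      lam2 * (∑ i, y i ^ 2) ≤ y ⬝ᵥ Q.mulVec y)
    (Ω Ωhat : ℝ → ℝ) (β : ℕ → ℝ) (d : ℝ)
    (hΩ : IsPredefinedTimeConsensusFunction Ω Ωhat β d)
    (Tc : ℝ) (hTc : 0 < Tc)
    (κ : Fin n → ℝ) (hκ : ∀ i, 1 / (lam2 * β n ^ ((2:ℝ) - d) * Tc) ≤ κ i)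
    (t₀ : ℝ) (x : ℝ → Fin n → ℝ)
    (hx : ∀ t, t₀ ≤ t →
      HasDerivAt x (fun i => if Q.mulVec (x t) i = 0 then 0
        else -(κ i * Ω |Q.mulVec (x t) i| / Q.mulVec (x t) i)) t) :
    ∀ t, t₀ + Tc ≤ t → ∀ i j, x t i = x t j := by
  obtain ⟨hΩm, hΩnn, hOhm, hOhpos, hOhcont, hβanti, hβpos, hd, hkey, hint⟩ := hΩ
  have hβn : 0 < β n := hβpos n
  have hrp : 0 < β n ^ ((2:ℝ) - d) := Real.rpow_pos_of_pos hβn _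
  have hβd : 0 < β n ^ d := Real.rpow_pos_of_pos hβn _
  set κ₀ : ℝ := 1 / (lam2 * β n ^ ((2:ℝ) - d) * Tc) with hκ₀def
  have hκ₀pos : 0 < κ₀ := by
    rw [hκ₀def]
    exact one_div_pos.mpr (mul_pos (mul_pos hlam2 hrp) hTc)
  have hκi : ∀ i, κ₀ ≤ κ i := hκ
  have hκpos : ∀ i, 0 < κ i := fun i => lt_of_lt_of_le hκ₀pos (hκi i)
  set V : ℝ → ℝ := fun t => x t ⬝ᵥ Q.mulVec (x t) with hVdef
  set W : ℝ → ℝ :=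
    fun t => ∑ i, (if Q.mulVec (x t) i = 0 then 0 else κ i * Ω |Q.mulVec (x t) i|) with hWdef
  have hVnn : ∀ t, 0 ≤ V t := fun t => by have := hQpsd.dotProduct_mulVec_nonneg (x t); simpa using this
  have hWnn : ∀ t, 0 ≤ W t := by
    intro t
    apply Finset.sum_nonneg
    intro i _
    by_cases hei : Q.mulVec (x t) i = 0
    · simp [hei]
    · simp only [if_neg hei]
      exact mul_nonneg (hκpos i).le (hΩnn _ (abs_nonneg _))
  have hquad := fun t => quadFacts hn Q hQsymm hQpsd hQ1 lam2 hlam2 hRay (x t)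
  have hV' : ∀ t, t₀ ≤ t → HasDerivAt V (-2 * W t) t := by
    intro t ht
    have h := hasDerivAt_quadForm Q hQsymm x _ t (hx t ht)
    have hval : ((fun i => if Q.mulVec (x t) i = 0 then 0
        else -(κ i * Ω |Q.mulVec (x t) i| / Q.mulVec (x t) i)) ⬝ᵥ Q.mulVec (x t)) = - W t := by
      rw [hWdef]
      simp only [dotProduct]
      rw [← Finset.sum_neg_distrib]
      apply Finset.sum_congr rfl
      intro i _
      by_cases hei : Q.mulVec (x t) i = 0
      · simp [hei]
      · simp only [if_neg hei]
        field_simp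
    rw [hval] at h
    have : 2 * - W t = -2 * W t := by ring
    rw [this] at h
    exact h
  have hVcont : ContinuousOn V (Set.Ici t₀) :=
    fun s hs => ((hV' s hs).continuousAt.continuousWithinAt)
  have hVanti : AntitoneOn V (Set.Ici t₀) := by
    apply antitoneOn_of_deriv_nonpos (convex_Ici t₀) hVcont
    · intro s hs
      rw [interior_Ici] at hs
      exact ((hV' s (le_of_lt hs)).differentiableAt.differentiableWithinAt)
    · intro s hs
      rw [interior_Ici] at hs
      rw [(hV' s (le_of_lt hs)).deriv]
      have := hWnn s
      linarith
  have hΩ0 : 0 ≤ Ω 0 := hΩnn 0 le_rfl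
  have hmain : ∀ t, t₀ + Tc ≤ t → V t = 0 := by
    rcases eq_or_lt_of_le hΩ0 with h0 | h0
    · -- Case B : Ω 0 = 0
      set f : ℝ → ℝ := fun z => z / Ωhat z with hfdef
      have hInt : IntegrableOn f (Set.Ioi 0) volume := by
        by_contra hni
        rw [MeasureTheory.integral_undef hni] at hint
        norm_num at hint
      have hfpos : ∀ z, 0 < z → 0 < f z := fun z hz => div_pos hz (hOhpos z hz)
      have hfae : 0 ≤ᵐ[volume.restrict (Set.Ioi 0)] f := by
        filter_upwards [self_mem_ae_restrict measurableSet_Ioi] with z hz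
        exact (hfpos z hz).le
      set F : ℝ → ℝ := fun u => ∫ z in (0:ℝ)..u, f z with hFdef
      set zf : ℝ → ℝ := fun s => β n * Real.sqrt (lam2 * V s) with hzfdef
      have hzfnn : ∀ s, 0 ≤ zf s := fun s => mul_nonneg hβn.le (Real.sqrt_nonneg _)
      have hWlowB : ∀ t, κ₀ * ((β n ^ d)⁻¹ * Ωhat (zf t)) ≤ W t := by
        intro t
        have hkey' := hkey n hn (fun i => |Q.mulVec (x t) i|) (fun i => abs_nonneg _)
        have habs : (∑ i, |Q.mulVec (x t) i| ^ 2) = ∑ i, (Q.mulVec (x t) i)^2 := by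
          apply Finset.sum_congr rfl
          intro i _
          exact sq_abs _
        rw [habs] at hkey'
        have hle1 : lam2 * V t ≤ ∑ i, (Q.mulVec (x t) i)^2 := (hquad t).1
        have hmono : Ωhat (zf t) ≤ Ωhat (β n * Real.sqrt (∑ i, (Q.mulVec (x t) i)^2)) := by
          apply hOhm (Set.mem_Ici.mpr (hzfnn t))
            (Set.mem_Ici.mpr (mul_nonneg hβn.le (Real.sqrt_nonneg _)))
          exact mul_le_mul_of_nonneg_left (Real.sqrt_le_sqrt hle1) hβn.le
        have hsum : (β n ^ d)⁻¹ * Ωhat (zf t) ≤ ∑ i, Ω |Q.mulVec (x t) i| := by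
          rw [inv_mul_le_iff₀ hβd]
          exact le_trans hmono hkey'
        have hsum2 : κ₀ * ∑ i, Ω |Q.mulVec (x t) i| ≤ W t := by
          rw [Finset.mul_sum]
          apply Finset.sum_le_sum
          intro i _
          by_cases hei : Q.mulVec (x t) i = 0
          · simp [hei, ← h0]
          · simp only [if_neg hei]
            exact mul_le_mul_of_nonneg_right (hκi i) (hΩnn _ (abs_nonneg _))
        calc κ₀ * ((β n ^ d)⁻¹ * Ωhat (zf t)) ≤ κ₀ * ∑ i, Ω |Q.mulVec (x t) i| :=
              mul_le_mul_of_nonneg_left hsum hκ₀pos.le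
          _ ≤ W t := hsum2
      intro t ht
      by_contra hVne
      have hVt : 0 < V t := lt_of_le_of_ne (hVnn t) (Ne.symm hVne)
      have htt : t₀ ≤ t := by linarith
      have hVposcc : ∀ s, s ∈ Set.Icc t₀ t → 0 < V s := by
        intro s hs
        exact lt_of_lt_of_le hVt (hVanti (Set.mem_Ici.mpr hs.1) (Set.mem_Ici.mpr htt) hs.2)
      have hclock : ∀ s ∈ Set.Icc t₀ t, HasDerivAt (fun r => F (zf r) + r * Tc⁻¹)
          (f (zf s) * (β n * (1 / (2 * Real.sqrt (lam2 * V s)) * (lam2 * (-2 * W s)))) + Tc⁻¹)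
          s := by
        intro s hs
        have hVs := hVposcc s hs
        have hsq : 0 < lam2 * V s := by positivity
        have hsqrt : 0 < Real.sqrt (lam2 * V s) := Real.sqrt_pos.mpr hsq
        have hz : 0 < zf s := mul_pos hβn hsqrt
        have hinner : HasDerivAt (fun r => lam2 * V r) (lam2 * (-2 * W s)) s :=
          (hV' s hs.1).const_mul lam2
        have hsqd : HasDerivAt (fun r => Real.sqrt (lam2 * V r))
            (1 / (2 * Real.sqrt (lam2 * V s)) * (lam2 * (-2 * W s))) s := by
          have := (Real.hasDerivAt_sqrt (ne_of_gt hsq)).comp s hinner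
          simpa [Function.comp_def] using this
        have hzd : HasDerivAt zf
            (β n * (1 / (2 * Real.sqrt (lam2 * V s)) * (lam2 * (-2 * W s)))) s :=
          hsqd.const_mul (β n)
        have hFd : HasDerivAt F (f (zf s)) (zf s) := by
          apply intervalIntegral.integral_hasDerivAt_right
          · rw [intervalIntegrable_iff, Set.uIoc_of_le (hzfnn s)]
            exact hInt.mono_set Set.Ioc_subset_Ioi_self
          · exact ⟨Set.Ioi 0, Ioi_mem_nhds hz, hInt.aestronglyMeasurable⟩
          · have hg : ContinuousAt (fun z => Ωhat z / z) (zf s) :=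
              hOhcont.continuousAt (Ioi_mem_nhds hz)
            have hgne : Ωhat (zf s) / zf s ≠ 0 := ne_of_gt (div_pos (hOhpos _ hz) hz)
            have h2 : ContinuousAt (fun z => (Ωhat z / z)⁻¹) (zf s) := hg.inv₀ hgne
            have hfeq : f = fun z => (Ωhat z / z)⁻¹ := by
              funext z
              rw [hfdef, inv_div]
            rw [hfeq]
            exact h2
        have hcomp := hFd.comp s hzd
        have : HasDerivAt (fun r => F (zf r))
            (f (zf s) * (β n * (1 / (2 * Real.sqrt (lam2 * V s)) * (lam2 * (-2 * W s))))) s := by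
          simpa [Function.comp_def] using hcomp
        exact this.add (hasDerivAt_mul_const Tc⁻¹)
      have hbound : ∀ s ∈ Set.Icc t₀ t,
          f (zf s) * (β n * (1 / (2 * Real.sqrt (lam2 * V s)) * (lam2 * (-2 * W s)))) + Tc⁻¹
            ≤ 0 := by
        intro s hs
        have hVs := hVposcc s hs
        have hsq : 0 < lam2 * V s := by positivity
        have hsqrt : 0 < Real.sqrt (lam2 * V s) := Real.sqrt_pos.mpr hsq
        have hz : 0 < zf s := mul_pos hβn hsqrt
        have hA : 0 < Ωhat (zf s) := hOhpos _ hz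
        have hgen : ∀ SQ A WW : ℝ, SQ ≠ 0 → A ≠ 0 →
            (β n * SQ / A) * (β n * (1 / (2 * SQ) * (lam2 * (-2 * WW))))
              = -(β n ^ 2 * lam2 * WW / A) := by
          intro SQ A WW hSQ hA2
          field_simp
        have hexp : f (zf s) * (β n * (1 / (2 * Real.sqrt (lam2 * V s)) * (lam2 * (-2 * W s))))
            = -(β n ^ 2 * lam2 * W s / Ωhat (zf s)) := by
          have h1 : f (zf s) = β n * Real.sqrt (lam2 * V s) / Ωhat (zf s) := rfl
          rw [h1, hgen (Real.sqrt (lam2 * V s)) (Ωhat (zf s)) (W s) (ne_of_gt hsqrt) (ne_of_gt hA)]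
        rw [hexp]
        have hconst : κ₀ * (β n ^ d)⁻¹ = (lam2 * (β n) ^ 2 * Tc)⁻¹ := by
          have hbb : β n ^ ((2:ℝ) - d) * β n ^ d = (β n) ^ 2 := by
            rw [← Real.rpow_add hβn]
            norm_num
          rw [hκ₀def, one_div, ← mul_inv]
          congr 1
          rw [mul_comm (lam2 * β n ^ ((2:ℝ) - d) * Tc) (β n ^ d)]
          rw [show lam2 * β n ^ ((2:ℝ) - d) * Tc = lam2 * (β n ^ ((2:ℝ) - d) * Tc) by ring]
          rw [show β n ^ d * (lam2 * (β n ^ ((2:ℝ) - d) * Tc))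
              = lam2 * (β n ^ ((2:ℝ) - d) * β n ^ d) * Tc by ring]
          rw [hbb]
        have hWge : (lam2 * (β n) ^ 2 * Tc)⁻¹ * Ωhat (zf s) ≤ W s := by
          rw [← hconst, mul_assoc]
          exact hWlowB s
        have hfin : Tc⁻¹ ≤ β n ^ 2 * lam2 * W s / Ωhat (zf s) := by
          rw [le_div_iff₀ hA]
          have h2 := mul_le_mul_of_nonneg_left hWge
            (by positivity : (0:ℝ) ≤ β n ^ 2 * lam2)
          calc Tc⁻¹ * Ωhat (zf s)
              = β n ^ 2 * lam2 * ((lam2 * (β n) ^ 2 * Tc)⁻¹ * Ωhat (zf s)) := by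
                field_simp
            _ ≤ β n ^ 2 * lam2 * W s := h2
        linarith
      have hanti2 : AntitoneOn (fun r => F (zf r) + r * Tc⁻¹) (Set.Icc t₀ t) := by
        apply antitoneOn_of_deriv_nonpos (convex_Icc _ _)
        · intro s hs
          exact (hclock s hs).continuousAt.continuousWithinAt
        · intro s hs
          rw [interior_Icc] at hs
          exact (hclock s (Set.Ioo_subset_Icc_self hs)).differentiableAt.differentiableWithinAt
        · intro s hs
          rw [interior_Icc] at hs
          rw [(hclock s (Set.Ioo_subset_Icc_self hs)).deriv]
          exact hbound s (Set.Ioo_subset_Icc_self hs)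
      have hle := hanti2 (Set.mem_Icc.mpr ⟨le_rfl, htt⟩) (Set.mem_Icc.mpr ⟨htt, le_rfl⟩) htt
      have hF0le : F (zf t₀) ≤ 1 := by
        rw [hFdef]
        simp only
        rw [intervalIntegral.integral_of_le (hzfnn t₀)]
        calc (∫ z in Set.Ioc 0 (zf t₀), f z) ≤ ∫ z in Set.Ioi 0, f z :=
            setIntegral_mono_set hInt hfae (HasSubset.Subset.eventuallyLE Set.Ioc_subset_Ioi_self)
          _ = 1 := hint
      have hFtpos : 0 < F (zf t) := by
        have hzt : 0 < zf t := mul_pos hβn (Real.sqrt_pos.mpr (by positivity))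
        rw [hFdef]
        simp only
        rw [intervalIntegral.integral_of_le (hzfnn t)]
        have hsub : Set.Ioc 0 (zf t) ⊆ Function.support f ∩ Set.Ioc 0 (zf t) := by
          intro z hz
          exact ⟨ne_of_gt (hfpos z hz.1), hz⟩
        refine (setIntegral_pos_iff_support_of_nonneg_ae ?_ ?_).mpr ?_
        · filter_upwards [self_mem_ae_restrict measurableSet_Ioc] with z hz
          exact (hfpos z hz.1).le
        · exact hInt.mono_set Set.Ioc_subset_Ioi_self
        · refine lt_of_lt_of_le ?_ (measure_mono hsub)
          rw [Real.volume_Ioc]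
          exact ENNReal.ofReal_pos.mpr (by linarith)
      have hTcle : 1 ≤ (t - t₀) * Tc⁻¹ := by
        rw [← div_eq_mul_inv, le_div_iff₀ hTc]
        linarith
      have hexpand : (t - t₀) * Tc⁻¹ = t * Tc⁻¹ - t₀ * Tc⁻¹ := by ring
      simp only at hle
      linarith
    · -- Case A : 0 < Ω 0
      have hc : 0 < 2 * κ₀ * Ω 0 := by positivity
      have hWlowA : ∀ s, 0 < V s → κ₀ * Ω 0 ≤ W s := by
        intro s hVs
        obtain ⟨i, hei⟩ : ∃ i, Q.mulVec (x s) i ≠ 0 := by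
          by_contra hall
          push_neg at hall
          have hz : Q.mulVec (x s) = 0 := funext hall
          have : V s = 0 := by
            rw [hVdef]
            simp only
            rw [hz, dotProduct_zero]
          linarith
        have h1 : κ₀ * Ω 0 ≤ (if Q.mulVec (x s) i = 0 then 0
            else κ i * Ω |Q.mulVec (x s) i|) := by
          rw [if_neg hei]
          calc κ₀ * Ω 0 ≤ κ₀ * Ω |Q.mulVec (x s) i| :=
                mul_le_mul_of_nonneg_left (hΩm (abs_nonneg _)) hκ₀pos.le
            _ ≤ κ i * Ω |Q.mulVec (x s) i| :=
                mul_le_mul_of_nonneg_right (hκi i) (hΩnn _ (abs_nonneg _))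
        have h2 : (if Q.mulVec (x s) i = 0 then 0 else κ i * Ω |Q.mulVec (x s) i|) ≤ W s := by
          simp only [hWdef]
          refine Finset.single_le_sum
            (f := fun j => if Q.mulVec (x s) j = 0 then 0 else κ j * Ω |Q.mulVec (x s) j|)
            (fun j _ => ?_) (Finset.mem_univ i)
          by_cases hej : Q.mulVec (x s) j = 0
          · simp [hej]
          · simp only [if_neg hej]
            exact mul_nonneg (hκpos j).le (hΩnn _ (abs_nonneg _))
        exact le_trans h1 h2
      have hlin : ∀ a b : ℝ, t₀ ≤ a → a ≤ b → (∀ s, a ≤ s → s < b → 0 < V s) →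
          V b + (2 * κ₀ * Ω 0) * b ≤ V a + (2 * κ₀ * Ω 0) * a := by
        intro a b ha hab hpos
        have hder : ∀ s ∈ Set.Icc a b,
            HasDerivAt (fun r => V r + (2 * κ₀ * Ω 0) * r) (-2 * W s + 2 * κ₀ * Ω 0) s := by
          intro s hs
          have h1 := (hV' s (ha.trans hs.1)).add ((hasDerivAt_id s).const_mul (2 * κ₀ * Ω 0))
          have : -2 * W s + 2 * κ₀ * Ω 0 * 1 = -2 * W s + 2 * κ₀ * Ω 0 := by ring
          rw [this] at h1
          exact h1
        have hanti : AntitoneOn (fun s => V s + (2 * κ₀ * Ω 0) * s) (Set.Icc a b) := by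
          apply antitoneOn_of_deriv_nonpos (convex_Icc a b)
          · intro s hs
            exact (hder s hs).continuousAt.continuousWithinAt
          · intro s hs
            rw [interior_Icc] at hs
            exact (hder s (Set.Ioo_subset_Icc_self hs)).differentiableAt.differentiableWithinAt
          · intro s hs
            rw [interior_Icc] at hs
            rw [(hder s (Set.Ioo_subset_Icc_self hs)).deriv]
            have := hWlowA s (hpos s hs.1.le hs.2)
            linarith
        exact hanti (Set.mem_Icc.mpr ⟨le_rfl, hab⟩) (Set.mem_Icc.mpr ⟨hab, le_rfl⟩) hab
      have hhit : ∃ s, t₀ ≤ s ∧ V s = 0 := by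
        by_contra hno
        push_neg at hno
        have hpos : ∀ s, t₀ ≤ s → 0 < V s :=
          fun s hs => lt_of_le_of_ne (hVnn s) (Ne.symm (hno s hs))
        obtain ⟨T, hT⟩ : ∃ T : ℝ, T = t₀ + V t₀ / (2 * κ₀ * Ω 0) + 1 := ⟨_, rfl⟩
        have hT0 : t₀ ≤ T := by
          have : 0 ≤ V t₀ / (2 * κ₀ * Ω 0) := div_nonneg (hVnn t₀) hc.le
          rw [hT]
          linarith
        have h1 := hlin t₀ T le_rfl hT0 (fun s hs _ => hpos s hs)
        have h2 : (2 * κ₀ * Ω 0) * (T - t₀) = V t₀ + 2 * κ₀ * Ω 0 := by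
          rw [hT]
          field_simp
          ring
        have h3 : (2 * κ₀ * Ω 0) * (T - t₀) = (2 * κ₀ * Ω 0) * T - (2 * κ₀ * Ω 0) * t₀ := by
          ring
        have := hVnn T
        linarith
      intro t ht
      by_cases hV0 : V t₀ = 0
      · have h1 : V t ≤ V t₀ :=
          hVanti (Set.mem_Ici.mpr le_rfl) (Set.mem_Ici.mpr (by linarith)) (by linarith)
        have h2 := hVnn t
        rw [hV0] at h1
        linarith
      · exfalso
        have hV0' : 0 < V t₀ := lt_of_le_of_ne (hVnn t₀) (Ne.symm hV0)
        set S : Set ℝ := Set.Ici t₀ ∩ V ⁻¹' {0} with hS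
        have hScl : IsClosed S :=
          hVcont.preimage_isClosed_of_isClosed isClosed_Ici isClosed_singleton
        obtain ⟨s₀, hs₀0, hs₀V⟩ := hhit
        have hSne : S.Nonempty := ⟨s₀, hs₀0, hs₀V⟩
        have hSbd : BddBelow S := ⟨t₀, fun y hy => hy.1⟩
        set t₁ := sInf S with ht₁
        have ht₁S : t₁ ∈ S := hScl.csInf_mem hSne hSbd
        have ht₁0 : t₀ ≤ t₁ := ht₁S.1
        have hVt₁ : V t₁ = 0 := ht₁S.2
        have ht₁gt : t₀ < t₁ := by
          rcases eq_or_lt_of_le ht₁0 with h | h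
          · exact absurd (h ▸ hVt₁) hV0
          · exact h
        have hposlt : ∀ s, t₀ ≤ s → s < t₁ → 0 < V s := by
          intro s hs hlt
          refine lt_of_le_of_ne (hVnn s) (Ne.symm ?_)
          intro hVs
          exact absurd (csInf_le hSbd ⟨hs, hVs⟩) (not_le.mpr hlt)
        have hlow : ∀ s, t₀ ≤ s → s < t₁ → (2 * κ₀ * Ω 0) * (t₁ - s) ≤ V s := by
          intro s hs hlt
          have h1 := hlin s t₁ hs hlt.le (fun r hr hrlt => hposlt r (hs.trans hr) hrlt)
          have h2 : (2 * κ₀ * Ω 0) * (t₁ - s) = (2 * κ₀ * Ω 0) * t₁ - (2 * κ₀ * Ω 0) * s := by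
            ring
          linarith [hVt₁ ▸ h1]
        have he₁ : Q.mulVec (x t₁) = 0 := ((hquad t₁).2 hVt₁).1
        have hW1 : W t₁ = 0 := by
          rw [hWdef]
          apply Finset.sum_eq_zero
          intro i _
          have hz0 : Q.mulVec (x t₁) i = 0 := by simpa using congrFun he₁ i
          rw [if_pos hz0]
        have hd₁ : HasDerivAt V 0 t₁ := by
          have h1 := hV' t₁ ht₁0
          rw [hW1] at h1
          simpa using h1
        have hκΩ : 0 < κ₀ * Ω 0 := by positivity
        have hslope := hasDerivAt_iff_tendsto_slope.mp hd₁
        have hslope' : Filter.Tendsto (slope V t₁) (nhdsWithin t₁ (Set.Iio t₁)) (nhds 0) :=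
          hslope.mono_left (nhdsWithin_mono t₁ (fun y hy => ne_of_lt hy))
        have hev1 : ∀ᶠ s in nhdsWithin t₁ (Set.Iio t₁), -(κ₀ * Ω 0) < slope V t₁ s :=
          hslope'.eventually (eventually_gt_nhds (by linarith))
        have hev2 : ∀ᶠ s in nhdsWithin t₁ (Set.Iio t₁), s ∈ Set.Ioo t₀ t₁ :=
          Filter.eventually_of_mem (Ioo_mem_nhdsLT ht₁gt) (fun y hy => hy)
        obtain ⟨s, hs1, hs2⟩ := (hev1.and hev2).exists
        have hVs := hlow s hs2.1.le hs2.2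
        have hst : s - t₁ < 0 := by linarith [hs2.2]
        have hslope_val : slope V t₁ s = V s / (s - t₁) := by
          rw [slope_def_field, hVt₁, sub_zero]
        have hsle : slope V t₁ s ≤ -(2 * (κ₀ * Ω 0)) := by
          rw [hslope_val, div_le_iff_of_neg hst]
          have hexp : -(2 * (κ₀ * Ω 0)) * (s - t₁) = (2 * κ₀ * Ω 0) * (t₁ - s) := by ring
          linarith
        linarith
  intro t ht i j
  exact ((hquad t).2 (hmain t ht)).2 i j
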